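/- arXiv:2101.10685 — 3 statements merged into one kernel-verified Lean document; each statement's English description precedes it below -/
import Mathlib

section
/- For every game G and every ε ≥ 0, the negotiation function has a least ε-fixed point: there exists an ε-fixed point λ* of nego such that λ*(v) ≤ λ(v) for every vertex v and every ε-fixed point λ of nego. -/
noncomputable section

open Filter

/-- Prepend a finite list to an infinite sequence. -/
def prependList {V : Type} (h : List V) (ρ : ℕ → V) : ℕ → V :=
  fun n => if hn : n < h.length then h.get ⟨n, hn⟩ else ρ (n - h.length)

/-- A (turn-based, multiplayer) game on a graph: a finite directed graph `(V, E)`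
in which every vertex has an outgoing edge, a partition of the vertices among the
players (given by `control`), and an outcome function `payoff : Π → V^ω → ℝ`. -/
structure GameStruct (P V : Type) where
  E : V → V → Prop
  total : ∀ v, ∃ w, E v w
  control : V → P
  payoff : P → (ℕ → V) → ℝ

namespace GameStruct

variable {P V : Type}

/-- A strategy: given the history before the current vertex and the current vertex,
choose a successor along an edge. -/
structure Strategy (G : GameStruct P V) where
  toFun : List V → V → V
  valid : ∀ h v, G.E v (toFun h v)

/-- A complete strategy profile. -/
abbrev Profile (G : GameStruct P V) := P → G.Strategy

def step (G : GameStruct P V) (σ : G.Profile) (p : List V × V) : List V × V :=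
  (p.1 ++ [p.2], (σ (G.control p.2)).toFun p.1 p.2)

/-- The play induced by the profile `σ` from vertex `v`, after the past history `h`. -/
def play (G : GameStruct P V) (σ : G.Profile) (h : List V) (v : V) : ℕ → V :=
  fun n => ((G.step σ)^[n] (h, v)).2

/-- An infinite path in the graph. -/
def IsPlay (G : GameStruct P V) (ρ : ℕ → V) : Prop := ∀ n, G.E (ρ n) (ρ (n + 1))

def IsPlayFrom (G : GameStruct P V) (v₀ : V) (ρ : ℕ → V) : Prop := ρ 0 = v₀ ∧ G.IsPlay ρ

/-- A history: a finite nonempty path. -/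
def IsHist (G : GameStruct P V) (H : List V) : Prop := H ≠ [] ∧ List.Chain' G.E H

/-- `hv` is a history of the initialized game `G_{∥v₀}` (here `h` is the part strictly
before the last vertex `v`; it may be empty, in which case `v = v₀`). -/
def IsHistFrom (G : GameStruct P V) (v₀ : V) (h : List V) (v : V) : Prop :=
  List.Chain' G.E (h ++ [v]) ∧ (h ++ [v]).head? = some v₀

/-- The (finite) history `H` is compatible with the strategy `σ` of player `j`. -/
def CompatList (G : GameStruct P V) (σ : G.Strategy) (j : P) (H : List V) : Prop :=
  ∀ k u w, H[k]? = some u → H[k + 1]? = some w → G.control u = j →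
    w = σ.toFun (H.take k) u

/-- The history `H` is compatible with `σ̄_{-i}`, i.e. with every strategy of the
profile except possibly that of player `i`. -/
def CompatExcept (G : GameStruct P V) (i : P) (σ : G.Profile) (H : List V) : Prop :=
  ∀ j, j ≠ i → G.CompatList (σ j) j H

/-- A play `ρ` is `l`-consistent for the requirement `l : V → ℝ ∪ {±∞}`. -/
def Consistent (G : GameStruct P V) (l : V → EReal) (ρ : ℕ → V) : Prop :=
  ∀ n, l (ρ n) ≤ (G.payoff (G.control (ρ n)) (fun k => ρ (n + k)) : EReal)

variable [DecidableEq P]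

/-- The set of `l`-rational strategy profiles (for the players other than `i`) from `v`.
A profile is identified with a complete profile whose `i`-component is irrelevant. -/
def LamRat (G : GameStruct P V) (l : V → EReal) (i : P) (v : V) : Set G.Profile :=
  { σ | ∃ σi : G.Strategy, ∀ h w, G.IsHistFrom v h w → G.CompatExcept i σ (h ++ [w]) →
      G.Consistent l (G.play (Function.update σ i σi) h w) }

/-- `sup_{σ_i} μ_i(⟨σ̄_{-i}, σ_i⟩_v)`. -/
def valAgainst (G : GameStruct P V) (i : P) (σ : G.Profile) (v : V) : EReal :=
  ⨆ σi : G.Strategy, (G.payoff i (G.play (Function.update σ i σi) [] v) : EReal)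

/-- The negotiation function, with the convention `inf ∅ = +∞`. -/
def nego (G : GameStruct P V) (l : V → EReal) : V → EReal :=
  fun v => ⨅ σ ∈ G.LamRat l (G.control v) v, G.valAgainst (G.control v) σ v

/-- A game with steady negotiation. -/
def SteadyNego (G : GameStruct P V) : Prop :=
  ∀ (i : P) (v : V) (l : V → EReal),
    G.LamRat l i v = ∅ ∨
      ∃ σ ∈ G.LamRat l i v, ∀ τ ∈ G.LamRat l i v, G.valAgainst i σ v ≤ G.valAgainst i τ v

/-- Nash equilibrium in `G_{∥v₀}`. -/
def IsNE (G : GameStruct P V) (v₀ : V) (σ : G.Profile) : Prop :=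
  ∀ (i : P) (σ' : G.Strategy),
    G.payoff i (G.play (Function.update σ i σ') [] v₀) ≤ G.payoff i (G.play σ [] v₀)

/-- `ε`-subgame-perfect equilibrium in `G_{∥v₀}`. -/
def IsEpsSPE (G : GameStruct P V) (v₀ : V) (ε : ℝ) (σ : G.Profile) : Prop :=
  ∀ h v, G.IsHistFrom v₀ h v → ∀ (i : P) (σ' : G.Strategy),
    G.payoff i (prependList h (G.play (Function.update σ i σ') h v)) ≤
      G.payoff i (prependList h (G.play σ h v)) + ε

/-- `l` is an `ε`-fixed point of the negotiation function (`±∞` is within `ε` of itself). -/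
def IsEFix (G : GameStruct P V) (ε : ℝ) (l : V → EReal) : Prop :=
  ∀ v, l v - (ε : EReal) ≤ G.nego l v ∧ G.nego l v ≤ l v + (ε : EReal)

/-- Prefix-independent game. -/
def PrefixIndependent (G : GameStruct P V) : Prop :=
  ∀ (h : List V) (ρ : ℕ → V), G.IsHist h → G.IsPlay ρ → ∀ i,
    G.payoff i (prependList h ρ) = G.payoff i ρ

/-- Well-initialized game: every vertex is reachable from `v₀`. -/
def WellInit (G : GameStruct P V) (v₀ : V) : Prop :=
  ∀ v, Relation.ReflTransGen G.E v₀ v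

/-- `G` is the mean-payoff game given by the weight function `π`. -/
def IsMeanPayoff (G : GameStruct P V) (π : P → V → V → ℚ) : Prop :=
  ∀ i ρ, G.payoff i ρ =
    Filter.liminf
      (fun n : ℕ => (∑ k ∈ Finset.range n, (π i (ρ k) (ρ (k + 1)) : ℝ)) / n)
      Filter.atTop

end GameStruct

open GameStruct in
/-- The negotiation function is monotone. -/
lemma nego_mono' {P V : Type} [DecidableEq P] (G : GameStruct P V)
    {l l' : V → EReal} (h : l ≤ l') : G.nego l ≤ G.nego l' := by
  intro v
  refine le_iInf₂ fun σ hσ => iInf₂_le σ ?_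
  obtain ⟨σi, hσi⟩ := hσ
  exact ⟨σi, fun hh w hw hc n => le_trans (h _) (hσi hh w hw hc n)⟩

lemma EReal.sub_le_self' {x : EReal} {ε : ℝ} (hε : 0 ≤ ε) : x - (ε : EReal) ≤ x := by
  rw [EReal.sub_le_iff_le_add (.inl (EReal.coe_ne_bot ε)) (.inl (EReal.coe_ne_top ε))]
  calc x = x + 0 := by rw [add_zero]
    _ ≤ x + (ε : EReal) := add_le_add le_rfl (show (0 : EReal) ≤ ε by exact_mod_cast hε)

open GameStruct in
/-- For every game and every `ε ≥ 0`, the negotiation function has a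
least `ε`-fixed point. -/
theorem exists_least_eps_fixed_point
    {P V : Type} [Fintype P] [Fintype V] [DecidableEq P]
    (G : GameStruct P V) (ε : ℝ) (hε : 0 ≤ ε) :
    ∃ lstar : V → EReal, G.IsEFix ε lstar ∧
      ∀ l : V → EReal, G.IsEFix ε l → ∀ v, lstar v ≤ l v := by
  -- Consider the monotone map `f l = nego l - ε` on the complete lattice `V → EReal`.
  set f : (V → EReal) →o (V → EReal) :=
    ⟨fun l v => G.nego l v - (ε : EReal),
     fun l l' h v => EReal.sub_le_sub (nego_mono' G h v) le_rfl⟩ with hf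
  refine ⟨f.lfp, ?_, ?_⟩
  · -- the least fixed point of `f` is an `ε`-fixed point of `nego`
    have hfix : ∀ v, G.nego f.lfp v - (ε : EReal) = f.lfp v :=
      fun v => congrFun f.map_lfp v
    intro v
    constructor
    · calc f.lfp v - (ε : EReal) = (G.nego f.lfp v - (ε : EReal)) - (ε : EReal) := by
            rw [hfix v]
        _ ≤ G.nego f.lfp v := le_trans (EReal.sub_le_self' hε) (EReal.sub_le_self' hε)
    · calc G.nego f.lfp v = (G.nego f.lfp v - (ε : EReal)) + (ε : EReal) := by
            rw [EReal.sub_add_cancel]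
        _ = f.lfp v + (ε : EReal) := by rw [hfix v]
        _ ≤ f.lfp v + (ε : EReal) := le_rfl
  · -- minimality
    intro l hl v
    have hpre : f l ≤ l := by
      intro w
      have := (hl w).2
      rwa [← EReal.sub_le_iff_le_add (.inl (EReal.coe_ne_bot ε))
        (.inl (EReal.coe_ne_top ε))] at this
    exact f.lfp_le hpre v
end
end

section
/- Let G_{∥v₀} be an initialized prefix-independent game, let ε ≥ 0, and let λ* be the least ε-fixed point of the negotiation function. If ξ is a play starting at v₀ and there exists an ε-SPE σ̄ in G_{∥v₀} with ⟨σ̄⟩_{v₀} = ξ, then ξ is λ*-consistent. -/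
noncomputable section

open Filter

namespace GameStruct

variable {P V : Type}

/-- Shift a strategy by a past history `h`. -/
def shiftStrat (G : GameStruct P V) (s : G.Strategy) (h : List V) : G.Strategy where
  toFun a v := s.toFun (h ++ a) v
  valid a v := s.valid (h ++ a) v

/-- Shift a profile by a past history `h`. -/
def shiftProfile (G : GameStruct P V) (σ : G.Profile) (h : List V) : G.Profile :=
  fun j => G.shiftStrat (σ j) h

lemma iterate_step_append (G : GameStruct P V) (σ τ : G.Profile) (h : List V)
    (hrel : ∀ a u, (σ (G.control u)).toFun (h ++ a) u = (τ (G.control u)).toFun a u) :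
    ∀ (n : ℕ) (a : List V) (v : V),
      (G.step σ)^[n] (h ++ a, v) =
        (h ++ ((G.step τ)^[n] (a, v)).1, ((G.step τ)^[n] (a, v)).2) := by
  intro n
  induction n with
  | zero => intro a v; simp
  | succ n ih =>
    intro a v
    rw [Function.iterate_succ_apply, Function.iterate_succ_apply]
    have hs : G.step σ (h ++ a, v) = (h ++ (a ++ [v]), (τ (G.control v)).toFun a v) := by
      simp [step, hrel]
    have ht : G.step τ (a, v) = (a ++ [v], (τ (G.control v)).toFun a v) := rfl
    rw [hs, ht, ih]

lemma play_shift (G : GameStruct P V) (σ : G.Profile) (h a : List V) (v : V) :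
    G.play σ (h ++ a) v = G.play (G.shiftProfile σ h) a v := by
  funext n
  have := G.iterate_step_append σ (G.shiftProfile σ h) h (fun a u => rfl) n a v
  simp only [play, this]

lemma play_isPlay (G : GameStruct P V) (σ : G.Profile) (h : List V) (v : V) :
    G.IsPlay (G.play σ h v) := by
  intro n
  show G.E ((G.step σ)^[n] (h, v)).2 ((G.step σ)^[n+1] (h, v)).2
  rw [Function.iterate_succ_apply']
  exact (σ (G.control ((G.step σ)^[n] (h, v)).2)).valid _ _

lemma isHistFrom_iterate (G : GameStruct P V) (σ : G.Profile) {v₀ : V} {h : List V} {v : V}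
    (hh : G.IsHistFrom v₀ h v) (n : ℕ) :
    G.IsHistFrom v₀ ((G.step σ)^[n] (h, v)).1 ((G.step σ)^[n] (h, v)).2 := by
  induction n with
  | zero => exact hh
  | succ n ih =>
    rw [Function.iterate_succ_apply']
    set p := (G.step σ)^[n] (h, v) with hp
    show G.IsHistFrom v₀ (p.1 ++ [p.2]) ((σ (G.control p.2)).toFun p.1 p.2)
    constructor
    · apply List.IsChain.append ih.1 (List.isChain_singleton _)
      intro x hx y hy
      rw [List.getLast?_concat] at hx
      simp only [List.head?_cons, Option.mem_def, Option.some.injEq] at hx hy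
      rw [← hx, ← hy]
      exact (σ (G.control p.2)).valid p.1 p.2
    · have haux : ∀ (l : List V) (a : V) (l' : List V),
          (l ++ [a] ++ l').head? = (l ++ [a]).head? := by
        intro l a l'; cases l <;> simp
      exact (haux p.1 p.2 _).trans ih.2

lemma isHistFrom_append (G : GameStruct P V) {v₀ v w : V} {h h' : List V}
    (h1 : G.IsHistFrom v₀ h v) (h2 : G.IsHistFrom v h' w) :
    G.IsHistFrom v₀ (h ++ h') w := by
  obtain ⟨hc1, hh1⟩ := h1
  obtain ⟨hc2, hh2⟩ := h2
  have hcons : h' ++ [w] = v :: (h' ++ [w]).tail := by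
    cases hx : h' ++ [w] with
    | nil => simp at hx
    | cons a t => rw [hx] at hh2; simp at hh2; simp [hh2]
  constructor
  · have : h ++ h' ++ [w] = (h ++ [v]) ++ (h' ++ [w]).tail := by
      rw [List.append_assoc, List.append_assoc, hcons]; simp
    rw [this]
    apply List.IsChain.append hc1
    · rw [hcons] at hc2; exact hc2.tail
    · intro x hx y hy
      rw [List.getLast?_concat] at hx
      simp only [Option.mem_def, Option.some.injEq] at hx
      rw [hcons] at hc2
      replace hc2 := List.isChain_cons.mp hc2
      rw [← hx]
      exact hc2.1 y hy
  · rcases List.eq_nil_or_concat h with rfl | ⟨h₀, a, rfl⟩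
    · simp only [List.nil_append]
      have : v = v₀ := by simpa using hh1
      rw [hcons, this]; rfl
    · rw [List.concat_eq_append] at hh1 ⊢
      have haux : ∀ (l l' l'' : List V) (a : V),
          ((l ++ [a]) ++ l').head? = ((l ++ [a]) ++ l'').head? := by
        intro l l' l'' a; cases l <;> simp
      rw [List.append_assoc]
      exact ((haux h₀ (h' ++ [w]) [v] a).trans hh1)

variable [DecidableEq P]

/-- The requirement induced by a strategy profile: the infimum, over all histories from
`v₀` ending just before `v`, of the payoff of the induced play. -/
def lamHat (G : GameStruct P V) (σ : G.Profile) (v₀ : V) : V → EReal :=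
  fun v => ⨅ (h : List V) (_ : G.IsHistFrom v₀ h v),
    (G.payoff (G.control v) (G.play σ h v) : EReal)

lemma consistent_lamHat (G : GameStruct P V) (σ : G.Profile) {v₀ : V} {h : List V} {v : V}
    (hh : G.IsHistFrom v₀ h v) :
    G.Consistent (G.lamHat σ v₀) (G.play σ h v) := by
  intro n
  set p := (G.step σ)^[n] (h, v) with hpdef
  have hp : G.IsHistFrom v₀ p.1 p.2 := G.isHistFrom_iterate σ hh n
  have h2 : G.play σ h v n = p.2 := rfl
  have htail : (fun k => G.play σ h v (n + k)) = G.play σ p.1 p.2 := by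
    funext k
    show ((G.step σ)^[n + k] (h, v)).2 = ((G.step σ)^[k] p).2
    rw [add_comm, Function.iterate_add_apply]
  rw [htail, h2]
  exact iInf₂_le p.1 hp

end GameStruct

open GameStruct in
lemma lamHat_isEFix
    {P V : Type} [DecidableEq P]
    (G : GameStruct P V) (hpi : G.PrefixIndependent)
    (ε : ℝ) (hε : 0 ≤ ε) (v₀ : V)
    (σ : G.Profile) (hσ : G.IsEpsSPE v₀ ε σ) :
    G.IsEFix ε (G.lamHat σ v₀) := by
  intro v
  set i := G.control v with hi
  constructor
  · -- lower bound: lamHat v - ε ≤ nego v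
    have key : ∀ τ ∈ G.LamRat (G.lamHat σ v₀) i v, G.lamHat σ v₀ v ≤ G.valAgainst i τ v := by
      intro τ ⟨σi, hτ⟩
      have hhist : G.IsHistFrom v [] v := ⟨List.isChain_singleton _, rfl⟩
      have hcomp : G.CompatExcept i τ ([] ++ [v]) := by
        intro j _ k u w h1 h2 _
        simp at h2
      have hcons := hτ [] v hhist hcomp 0
      simp only [zero_add] at hcons
      have h0 : G.play (Function.update τ i σi) [] v 0 = v := rfl
      rw [h0] at hcons
      calc G.lamHat σ v₀ v
          ≤ (G.payoff i (fun k => G.play (Function.update τ i σi) [] v k) : EReal) := hcons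
        _ = (G.payoff i (G.play (Function.update τ i σi) [] v) : EReal) := rfl
        _ ≤ G.valAgainst i τ v := le_iSup (fun σi' : G.Strategy =>
              (G.payoff i (G.play (Function.update τ i σi') [] v) : EReal)) σi
    have : G.lamHat σ v₀ v - (ε : EReal) ≤ G.lamHat σ v₀ v := by
      rw [sub_eq_add_neg]
      calc G.lamHat σ v₀ v + (-(ε : EReal)) ≤ G.lamHat σ v₀ v + 0 := by
            apply add_le_add_right
            rw [← EReal.coe_neg]
            exact_mod_cast neg_nonpos.2 hε
        _ = G.lamHat σ v₀ v := add_zero _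
    refine this.trans (le_iInf₂ fun τ hτ => key τ hτ)
  · -- upper bound: nego v ≤ lamHat v + ε
    rw [← EReal.sub_le_iff_le_add (.inl (EReal.coe_ne_bot ε)) (.inl (EReal.coe_ne_top ε))]
    apply le_iInf₂
    intro h hh
    rw [EReal.sub_le_iff_le_add (.inl (EReal.coe_ne_bot ε)) (.inl (EReal.coe_ne_top ε))]
    -- the shifted profile is lamHat-rational from v
    have hmem : G.shiftProfile σ h ∈ G.LamRat (G.lamHat σ v₀) i v := by
      refine ⟨(G.shiftProfile σ h) i, fun h' w hh' _ => ?_⟩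
      rw [Function.update_eq_self, ← G.play_shift]
      exact G.consistent_lamHat σ (G.isHistFrom_append hh hh')
    have hval : G.valAgainst i (G.shiftProfile σ h) v
        ≤ ((G.payoff i (G.play σ h v) + ε : ℝ) : EReal) := by
      apply iSup_le
      intro σi
      rw [EReal.coe_le_coe_iff]
      -- pull the deviating strategy back to the original game
      set σ'' : G.Strategy := ⟨fun H u => σi.toFun (H.drop h.length) u,
        fun H u => σi.valid _ u⟩ with hσ''
      have hrel : ∀ a u, ((Function.update σ i σ'') (G.control u)).toFun (h ++ a) u
          = ((Function.update (G.shiftProfile σ h) i σi) (G.control u)).toFun a u := by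
        intro a u
        by_cases hc : G.control u = i
        · rw [hc, Function.update_self, Function.update_self, hσ'']
          simp [List.drop_left]
        · rw [Function.update_of_ne hc, Function.update_of_ne hc]
          rfl
      have hplay : G.play (Function.update σ i σ'') h v
          = G.play (Function.update (G.shiftProfile σ h) i σi) [] v := by
        funext n
        have := G.iterate_step_append (Function.update σ i σ'')
          (Function.update (G.shiftProfile σ h) i σi) h hrel n [] v
        simp only [List.append_nil] at this
        simp only [play, this]
      have hspe := hσ h v hh i σ''
      -- remove the prefix using prefix-independence
      have hrem : ∀ ρ : ℕ → V, G.IsPlay ρ →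
          G.payoff i (prependList h ρ) = G.payoff i ρ := by
        intro ρ hρ
        rcases eq_or_ne h [] with rfl | hne
        · have hpl : prependList ([] : List V) ρ = ρ := by
            funext n; simp [prependList]
          rw [hpl]
        · exact hpi h ρ ⟨hne, ((List.isChain_append).1 hh.1).1⟩ hρ i
      rw [hrem _ (G.play_isPlay _ _ _), hrem _ (G.play_isPlay _ _ _)] at hspe
      rw [← hplay]
      exact hspe
    calc G.nego (G.lamHat σ v₀) v ≤ G.valAgainst i (G.shiftProfile σ h) v :=
          iInf₂_le _ hmem
      _ ≤ ((G.payoff i (G.play σ h v) + ε : ℝ) : EReal) := hval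
      _ = (G.payoff i (G.play σ h v) : EReal) + (ε : EReal) := EReal.coe_add _ _

open GameStruct in
/-- In an initialized prefix-independent game, every play supported by an
`ε`-SPE is consistent with the least `ε`-fixed point of the negotiation function. -/
theorem epsSPE_play_consistent_least_fixed_point
    {P V : Type} [Fintype P] [Fintype V] [DecidableEq P]
    (G : GameStruct P V) (hpi : G.PrefixIndependent)
    (ε : ℝ) (hε : 0 ≤ ε)
    (lstar : V → EReal) (hfix : G.IsEFix ε lstar)
    (hleast : ∀ l : V → EReal, G.IsEFix ε l → ∀ v, lstar v ≤ l v)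
    (v₀ : V) (ξ : ℕ → V) (hξ : G.IsPlayFrom v₀ ξ)
    (σ : G.Profile) (hσ : G.IsEpsSPE v₀ ε σ) (hout : G.play σ [] v₀ = ξ) :
    G.Consistent lstar ξ := by
  have hfix' := lamHat_isEFix G hpi ε hε v₀ σ hσ
  have hle := hleast _ hfix'
  intro n
  have h0 : G.IsHistFrom v₀ [] v₀ := ⟨List.isChain_singleton _, rfl⟩
  set p := (G.step σ)^[n] (([] : List V), v₀) with hpdef
  have hp : G.IsHistFrom v₀ p.1 p.2 := G.isHistFrom_iterate σ h0 n
  have h2 : ξ n = p.2 := by rw [← hout]; rfl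
  have htail : (fun k => ξ (n + k)) = G.play σ p.1 p.2 := by
    funext k
    rw [← hout]
    show ((G.step σ)^[n + k] (([] : List V), v₀)).2 = ((G.step σ)^[k] p).2
    rw [add_comm, Function.iterate_add_apply]
  rw [htail, h2]
  exact (hle p.2).trans (iInf₂_le p.1 hp)
end
end

section
/- Let G_{∥v₀} be a well-initialized prefix-independent game with steady negotiation, let ε ≥ 0, and let λ be an ε-fixed point of the negotiation function. Then for every λ-consistent play ξ starting at v₀, there exists an ε-SPE σ̄ in G_{∥v₀} such that ⟨σ̄⟩_{v₀} = ξ. -/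
noncomputable section

open Filter

namespace GameStruct

section SPEAux

variable {P V : Type} [DecidableEq P]

variable (G : GameStruct P V)

/-- A default successor. -/
def dflt (v : V) : V := (G.total v).choose

lemma dflt_edge (v : V) : G.E v (G.dflt v) := (G.total v).choose_spec

/-- Default strategy. -/
def defStrat : G.Strategy := ⟨fun _ v => G.dflt v, fun _ v => G.dflt_edge v⟩

variable (l : V → EReal) (ξ : ℕ → V)

open Classical in
/-- The strategy following the play `ξ`. -/
def ξStrat : G.Strategy where
  toFun h v :=
    if h ++ [v] = (List.range (h.length + 1)).map ξ ∧ G.E v (ξ (h.length + 1))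
      then ξ (h.length + 1) else G.dflt v
  valid h v := by
    by_cases hc : h ++ [v] = (List.range (h.length + 1)).map ξ ∧ G.E v (ξ (h.length + 1))
    · simpa [hc] using hc.2
    · simp [hc, G.dflt_edge]

/-- Steady negotiation minimum exists at `a`. -/
def IsPunishable (a : V) : Prop :=
  ∃ σ ∈ G.LamRat l (G.control a) a, ∀ τ ∈ G.LamRat l (G.control a) a,
    G.valAgainst (G.control a) σ a ≤ G.valAgainst (G.control a) τ a

open Classical in
/-- The minimal punishing profile at `a` (against the controller of `a`). -/
def pun (a : V) : G.Profile :=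
  if h : G.IsPunishable l a then h.choose else fun _ => G.defStrat

lemma pun_mem {a : V} (h : G.IsPunishable l a) :
    G.pun l a ∈ G.LamRat l (G.control a) a := by
  rw [pun, dif_pos h]; exact h.choose_spec.1

lemma pun_min {a : V} (h : G.IsPunishable l a) :
    ∀ τ ∈ G.LamRat l (G.control a) a,
      G.valAgainst (G.control a) (G.pun l a) a ≤ G.valAgainst (G.control a) τ a := by
  rw [pun, dif_pos h]; exact h.choose_spec.2

open Classical in
/-- The consistency witness for the punished player at `a`. -/
def wit (a : V) : G.Strategy :=
  if h : ∃ σi : G.Strategy, ∀ h' w, G.IsHistFrom a h' w →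
      G.CompatExcept (G.control a) (G.pun l a) (h' ++ [w]) →
      G.Consistent l (G.play (Function.update (G.pun l a) (G.control a) σi) h' w)
    then h.choose else G.defStrat

lemma wit_spec {a : V} (h : G.IsPunishable l a) :
    ∀ h' w, G.IsHistFrom a h' w →
      G.CompatExcept (G.control a) (G.pun l a) (h' ++ [w]) →
      G.Consistent l (G.play (Function.update (G.pun l a) (G.control a) (G.wit l a)) h' w) := by
  have hx : ∃ σi : G.Strategy, ∀ h' w, G.IsHistFrom a h' w →
      G.CompatExcept (G.control a) (G.pun l a) (h' ++ [w]) →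
      G.Consistent l (G.play (Function.update (G.pun l a) (G.control a) σi) h' w) :=
    G.pun_mem l h
  rw [wit, dif_pos hx]; exact hx.choose_spec

/-- The profile prescribed in a given mode. -/
def modeProf : Option V → G.Profile
  | none => fun _ => G.ξStrat ξ
  | some a => Function.update (G.pun l a) (G.control a) (G.wit l a)

open Classical in
/-- State transition of the machinery. -/
def stApp (s : Option V × List V) (v w : V) : Option V × List V :=
  if w = ((G.modeProf l ξ s.1) (G.control v)).toFun s.2 v then (s.1, s.2 ++ [v])
  else
    match s.1 with
    | none => (some v, [v])
    | some a =>
        if G.control v = G.control a ∧ ¬ (G.nego l v < G.nego l a)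
          then (some a, s.2 ++ [v]) else (some v, [v])

/-- Run the machinery state along a list of future vertices. -/
def runSt : Option V × List V → V → List V → Option V × List V
  | s, _, [] => s
  | s, v, w :: t => runSt (G.stApp l ξ s v w) w t

/-- The machinery state at history `(h, v)`. -/
def stateOf : List V → V → Option V × List V
  | [], _ => (none, [])
  | x :: t, v => G.runSt l ξ (none, []) x (t ++ [v])

/-- The machinery profile (the candidate ε-SPE). -/
def mach : G.Profile := fun _ =>
  ⟨fun h v => ((G.modeProf l ξ (G.stateOf l ξ h v).1) (G.control v)).toFun
      (G.stateOf l ξ h v).2 v,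
   fun h v => Strategy.valid _ _ _⟩

lemma getLastD_cons' (x v : V) (t : List V) : (x :: t).getLastD v = t.getLastD x := by
  cases t <;> simp [List.getLastD]

lemma getLastD_concat (x v : V) (t : List V) : (t ++ [v]).getLastD x = v := by
  induction t generalizing x with
  | nil => rfl
  | cons y t ih => rw [List.cons_append, getLastD_cons', ih]

lemma runSt_snoc (s : Option V × List V) (v : V) (t : List V) (w : V) :
    G.runSt l ξ s v (t ++ [w]) = G.stApp l ξ (G.runSt l ξ s v t) (t.getLastD v) w := by
  induction t generalizing s v with
  | nil => simp [runSt]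
  | cons x t ih => rw [List.cons_append]; show G.runSt l ξ _ x (t ++ [w]) = _
                   rw [ih, getLastD_cons']; rfl

lemma stateOf_nil (v : V) : G.stateOf l ξ [] v = (none, []) := rfl

lemma stateOf_snoc (h : List V) (v w : V) :
    G.stateOf l ξ (h ++ [v]) w = G.stApp l ξ (G.stateOf l ξ h v) v w := by
  cases h with
  | nil => simp [stateOf, runSt]
  | cons x t =>
      show G.runSt l ξ (none, []) x ((t ++ [v]) ++ [w]) = _
      rw [G.runSt_snoc, getLastD_concat]
      rfl

/-! ### Play infrastructure -/

/-- The accumulated history after `n` steps. -/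
def histOf (σ : G.Profile) (h : List V) (v : V) (n : ℕ) : List V :=
  ((G.step σ)^[n] (h, v)).1

variable {G}

lemma play_zero (σ : G.Profile) (h : List V) (v : V) : G.play σ h v 0 = v := rfl

lemma histOf_zero (σ : G.Profile) (h : List V) (v : V) : G.histOf σ h v 0 = h := rfl

lemma play_succ (σ : G.Profile) (h : List V) (v : V) (n : ℕ) :
    G.play σ h v (n + 1) = G.play σ (h ++ [v]) ((σ (G.control v)).toFun h v) n := by
  show ((G.step σ)^[n + 1] (h, v)).2 = _
  rw [Function.iterate_succ_apply]
  rfl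

lemma histOf_succ_bot (σ : G.Profile) (h : List V) (v : V) (n : ℕ) :
    G.histOf σ h v (n + 1) = G.histOf σ (h ++ [v]) ((σ (G.control v)).toFun h v) n := by
  show ((G.step σ)^[n + 1] (h, v)).1 = _
  rw [Function.iterate_succ_apply]
  rfl

lemma histOf_succ (σ : G.Profile) (h : List V) (v : V) (n : ℕ) :
    G.histOf σ h v (n + 1) = G.histOf σ h v n ++ [G.play σ h v n] := by
  show ((G.step σ)^[n + 1] (h, v)).1 = _
  rw [Function.iterate_succ_apply']
  rfl

lemma play_succ_top (σ : G.Profile) (h : List V) (v : V) (n : ℕ) :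
    G.play σ h v (n + 1)
      = (σ (G.control (G.play σ h v n))).toFun (G.histOf σ h v n) (G.play σ h v n) := by
  show ((G.step σ)^[n + 1] (h, v)).2 = _
  rw [Function.iterate_succ_apply']
  rfl

lemma histOf_eq (σ : G.Profile) (h : List V) (v : V) (n : ℕ) :
    G.histOf σ h v n = h ++ (List.range n).map (G.play σ h v) := by
  induction n with
  | zero => simp [histOf_zero]
  | succ n ih =>
      rw [histOf_succ, ih, List.range_succ, List.map_append, List.append_assoc]
      rfl

lemma play_edge (σ : G.Profile) (h : List V) (v : V) (n : ℕ) :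
    G.E (G.play σ h v n) (G.play σ h v (n + 1)) := by
  rw [play_succ_top]; exact Strategy.valid _ _ _

lemma isPlay_play (σ : G.Profile) (h : List V) (v : V) : G.IsPlay (G.play σ h v) :=
  fun n => play_edge σ h v n

lemma play_add (σ : G.Profile) (h : List V) (v : V) (n k : ℕ) :
    G.play σ h v (n + k) = G.play σ (G.histOf σ h v n) (G.play σ h v n) k := by
  show ((G.step σ)^[n + k] (h, v)).2 = ((G.step σ)^[k] (_, _)).2
  rw [add_comm, Function.iterate_add_apply]
  rfl

lemma isHistFrom_snoc_iff {v₀ : V} (h : List V) (v w : V) :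
    G.IsHistFrom v₀ (h ++ [v]) w ↔ G.IsHistFrom v₀ h v ∧ G.E v w := by
  unfold IsHistFrom
  have hhead : ((h ++ [v]) ++ [w]).head? = (h ++ [v]).head? := by cases h <;> rfl
  rw [hhead]
  constructor
  · rintro ⟨hc, hh⟩
    unfold List.Chain' at hc
    rw [List.isChain_append] at hc
    obtain ⟨h1, -, h3⟩ := hc
    refine ⟨⟨h1, hh⟩, h3 v ?_ w ?_⟩
    · rw [List.getLast?_concat]; rfl
    · rfl
  · rintro ⟨⟨hc, hh⟩, he⟩
    refine ⟨List.isChain_append.mpr ⟨hc, List.isChain_singleton w, ?_⟩, hh⟩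
    intro x hx y hy
    rw [List.getLast?_concat] at hx
    cases hx
    cases hy
    exact he

/-! ### prependList and prefix-independence -/

lemma prependList_nil (ρ : ℕ → V) : prependList ([] : List V) ρ = ρ := by
  funext n; simp [prependList]

lemma prependList_add (h : List V) (ρ : ℕ → V) (n : ℕ) :
    prependList h ρ (h.length + n) = ρ n := by
  simp [prependList]

lemma chain'_rangeMap {ρ : ℕ → V} (hρ : G.IsPlay ρ) (n : ℕ) :
    List.Chain' G.E ((List.range n).map ρ) := by
  unfold List.Chain'
  rw [List.isChain_iff_getElem]
  intro i hi
  simp only [List.length_map, List.length_range] at hi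
  simpa using hρ i

lemma shift_isPlay {ρ : ℕ → V} (hρ : G.IsPlay ρ) (n : ℕ) :
    G.IsPlay (fun k => ρ (n + k)) := by
  intro k
  show G.E (ρ (n + k)) (ρ (n + (k + 1)))
  rw [← add_assoc]
  exact hρ (n + k)

lemma prependList_shift (ρ : ℕ → V) (n : ℕ) :
    prependList ((List.range n).map ρ) (fun k => ρ (n + k)) = ρ := by
  funext k
  simp only [prependList, List.length_map, List.length_range]
  split
  · next hk => simp
  · next hk => congr 1; omega

lemma payoff_shift (hpi : G.PrefixIndependent) {ρ : ℕ → V} (hρ : G.IsPlay ρ)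
    (n : ℕ) (i : P) :
    G.payoff i ρ = G.payoff i (fun k => ρ (n + k)) := by
  cases n with
  | zero => congr 1; funext k; rw [zero_add]
  | succ m =>
      have h1 := hpi ((List.range (m + 1)).map ρ) (fun k => ρ ((m + 1) + k))
        ⟨by simp, chain'_rangeMap hρ (m + 1)⟩ (shift_isPlay hρ (m + 1)) i
      rw [prependList_shift] at h1
      exact h1

/-- `H` agrees with the sequence `L` (is a prefix of it). -/
def Agrees (L : ℕ → V) (H : List V) : Prop := ∀ k (hk : k < H.length), H.get ⟨k, hk⟩ = L k

lemma Agrees.eq_rangeMap {L : ℕ → V} {H : List V} (h : Agrees L H) :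
    H = (List.range H.length).map L := by
  apply List.ext_get
  · simp
  · intro n h1 h2
    simpa using h n h1

lemma agrees_rangeMap (L : ℕ → V) (n : ℕ) : Agrees L ((List.range n).map L) := by
  intro k hk
  simp

lemma Agrees.snoc {L : ℕ → V} {H : List V} (h : Agrees L H) (hv : L H.length = v) :
    Agrees L (H ++ [v]) := by
  intro k hk
  simp only [List.length_append, List.length_singleton] at hk
  by_cases hlt : k < H.length
  · have := h k hlt; simp only [List.get_eq_getElem] at this ⊢; rw [List.getElem_append_left hlt]
    exact this
  · have hk' : k = H.length := by omega
    subst hk'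
    simp [hv]

/-! ### Machinery play lemmas -/

lemma stApp_conform (s : Option V × List V) (v : V) :
    G.stApp l ξ s v (((G.modeProf l ξ s.1) (G.control v)).toFun s.2 v)
      = (s.1, s.2 ++ [v]) := by
  unfold stApp
  rw [if_pos rfl]

lemma mach_toFun (p : P) (h : List V) (v : V) :
    (G.mach l ξ p).toFun h v
      = ((G.modeProf l ξ (G.stateOf l ξ h v).1) (G.control v)).toFun
          (G.stateOf l ξ h v).2 v := rfl

lemma play_mach (h : List V) (v : V) (n : ℕ) :
    G.play (G.mach l ξ) h v n
      = G.play (G.modeProf l ξ (G.stateOf l ξ h v).1) (G.stateOf l ξ h v).2 v n := by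
  induction n generalizing h v with
  | zero => rfl
  | succ n ih =>
      rw [play_succ, play_succ, ih, mach_toFun, stateOf_snoc, stApp_conform]

/-- The `ξ`-prefix predicate for the conforming mode. -/
def ξpre (h : List V) (v : V) : Prop :=
  h ++ [v] = (List.range (h.length + 1)).map ξ

lemma ξpre_last {h : List V} {v : V} (hp : ξpre ξ h v) : v = ξ h.length := by
  have h1 : (h ++ [v])[h.length]? = some v := List.getElem?_concat_length
  rw [hp] at h1
  simpa using h1.symm

lemma ξpre_extend {h : List V} {v : V} (hp : ξpre ξ h v) :
    ξpre ξ (h ++ [v]) (ξ (h.length + 1)) := by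
  unfold ξpre at hp ⊢
  simp only [List.length_append, List.length_singleton]
  rw [List.range_succ, List.map_append, ← hp]
  rfl

lemma ξStrat_move {h : List V} {v : V} (hξ2 : G.IsPlay ξ) (hp : ξpre ξ h v) :
    (G.ξStrat ξ).toFun h v = ξ (h.length + 1) := by
  classical
  have hred : (G.ξStrat ξ).toFun h v
      = if h ++ [v] = (List.range (h.length + 1)).map ξ ∧ G.E v (ξ (h.length + 1))
          then ξ (h.length + 1) else G.dflt v := rfl
  rw [hred, if_pos]
  exact ⟨hp, by rw [ξpre_last ξ hp]; exact hξ2 h.length⟩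

lemma play_conform (hξ2 : G.IsPlay ξ) {h : List V} {v : V} (hp : ξpre ξ h v) (n : ℕ) :
    G.play (G.modeProf l ξ none) h v n = ξ (h.length + n) := by
  induction n generalizing h v with
  | zero => rw [add_zero]; exact ξpre_last ξ hp
  | succ n ih =>
      rw [play_succ]
      have hmv : (G.modeProf l ξ none (G.control v)).toFun h v = ξ (h.length + 1) :=
        ξStrat_move (G := G) (ξ := ξ) hξ2 hp
      rw [hmv, ih (ξpre_extend ξ hp)]
      congr 1
      simp only [List.length_append, List.length_singleton]
      omega

/-! ### Compatibility lemmas -/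

lemma head?_append_of_ne_nil {l₁ : List V} (l₂ : List V) (h : l₁ ≠ []) :
    (l₁ ++ l₂).head? = l₁.head? := by
  cases l₁ with
  | nil => exact absurd rfl h
  | cons a t => rfl

lemma chain'_suffix' {l₁ l₂ : List V} (h : List.Chain' G.E (l₁ ++ l₂)) :
    List.Chain' G.E l₂ :=
  (List.isChain_append.mp h).2.1

lemma compatList_snoc {σs : G.Strategy} {j : P} {H : List V} {v w : V}
    (hc : G.CompatList σs j (H ++ [v]))
    (hw : G.control v = j → w = σs.toFun H v) :
    G.CompatList σs j ((H ++ [v]) ++ [w]) := by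
  intro k u x hk hk1 hj
  obtain ⟨hlt, -⟩ := List.getElem?_eq_some_iff.mp hk1
  simp only [List.length_append, List.length_singleton] at hlt
  by_cases hcase : k + 1 < (H ++ [v]).length
  · rw [List.getElem?_append_left hcase] at hk1
    rw [List.getElem?_append_left (by omega)] at hk
    have hres := hc k u x hk hk1 hj
    rwa [List.take_append_of_le_length (by omega)]
  · have hk' : k = H.length := by
      simp only [List.length_append, List.length_singleton] at hcase ⊢
      omega
    subst hk'
    have hu : u = v := by
      rw [List.getElem?_append_left (by simp), List.getElem?_concat_length] at hk
      exact (Option.some.injEq _ _ ▸ hk).symm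
    have hx : x = w := by
      have : ((H ++ [v]) ++ [w])[H.length + 1]? = some w := by
        have := List.getElem?_concat_length (l := H ++ [v]) (a := w)
        simpa using this
      rw [this] at hk1
      exact (Option.some.injEq _ _ ▸ hk1).symm
    have htake : ((H ++ [v]) ++ [w]).take H.length = H := by
      rw [List.append_assoc]
      exact List.take_left
    rw [hu] at hj
    rw [hu, hx, htake]
    exact hw hj

lemma compatExcept_snoc {i : P} {σ : G.Profile} {H : List V} {v w : V}
    (hc : G.CompatExcept i σ (H ++ [v]))
    (hw : ∀ j, j ≠ i → G.control v = j → w = (σ j).toFun H v) :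
    G.CompatExcept i σ ((H ++ [v]) ++ [w]) :=
  fun j hj => compatList_snoc (hc j hj) (hw j hj)

lemma compatExcept_pair {i : P} (σ : G.Profile) {v : V} (w : V) (hv : G.control v = i) :
    G.CompatExcept i σ ([v] ++ [w]) := by
  intro j hj k u x hk hk1 hju
  exfalso
  obtain ⟨hlt, -⟩ := List.getElem?_eq_some_iff.mp hk1
  simp only [List.singleton_append, List.length_cons, List.length_nil] at hlt
  have hk0 : k = 0 := by omega
  subst hk0
  have hu : u = v := by
    simp only [List.singleton_append, List.getElem?_cons_zero] at hk
    exact (Option.some.injEq _ _ ▸ hk).symm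
  rw [hu, hv] at hju
  exact hj hju.symm

/-! ### The machinery invariant -/

/-- Invariant of the machinery state at a history. -/
def StInv (h : List V) (v : V) : Prop :=
  (∀ lh, G.stateOf l ξ h v = (none, lh) → lh = h ∧ ξpre ξ h v) ∧
  (∀ a lh, G.stateOf l ξ h v = (some a, lh) →
    G.IsPunishable l a ∧ (∃ base, h = base ++ lh) ∧ lh ≠ [] ∧ lh.head? = some a ∧
      G.CompatExcept (G.control a) (G.pun l a) (lh ++ [v]))

lemma mach_consistent {v₀ : V} (hξ2 : G.IsPlay ξ) (hcons : G.Consistent l ξ)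
    {h : List V} {v : V} (hh : G.IsHistFrom v₀ h v) (hinv : StInv (G := G) l ξ h v) :
    G.Consistent l (G.play (G.mach l ξ) h v) := by
  have hplay : G.play (G.mach l ξ) h v
      = G.play (G.modeProf l ξ (G.stateOf l ξ h v).1) (G.stateOf l ξ h v).2 v :=
    funext fun n => play_mach (G := G) l ξ h v n
  rw [hplay]
  cases hmode : (G.stateOf l ξ h v).1 with
  | none =>
      have hst : G.stateOf l ξ h v = (none, (G.stateOf l ξ h v).2) := by
        rw [← hmode]
      obtain ⟨hlh, hpre⟩ := hinv.1 _ hst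
      rw [hlh]
      intro n
      have hc : ∀ m, G.play (G.modeProf l ξ none) h v m = ξ (h.length + m) :=
        fun m => play_conform (G := G) l ξ hξ2 hpre m
      rw [hc n]
      have hfun : (fun k => G.play (G.modeProf l ξ none) h v (n + k))
          = fun k => ξ ((h.length + n) + k) := by
        funext k
        rw [hc (n + k), ← add_assoc]
      rw [hfun]
      exact hcons (h.length + n)
  | some a =>
      have hst : G.stateOf l ξ h v = (some a, (G.stateOf l ξ h v).2) := by
        rw [← hmode]
      obtain ⟨hpun, ⟨base, hbase⟩, hne, hhead, hcomp⟩ := hinv.2 a _ hst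
      have hhist : G.IsHistFrom a (G.stateOf l ξ h v).2 v := by
        constructor
        · have := hh.1
          rw [hbase, List.append_assoc] at this
          exact chain'_suffix' this
        · rw [head?_append_of_ne_nil _ hne]
          exact hhead
      exact wit_spec G l hpun _ v hhist hcomp

lemma punishable_of_le (hsteady : G.SteadyNego) {ε : ℝ} (hfix : G.IsEFix ε l)
    {a : V} {r : ℝ} (hle : l a ≤ (r : EReal)) : G.IsPunishable l a := by
  rcases hsteady (G.control a) a l with hemp | hmin
  · exfalso
    have hne : G.nego l a = ⊤ := by
      unfold nego
      rw [hemp]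
      simp
    have h2 := (hfix a).2
    rw [hne] at h2
    have hlt : l a + (ε : EReal) < ⊤ :=
      EReal.add_lt_top (lt_of_le_of_lt hle (EReal.coe_lt_top r)).ne (EReal.coe_lt_top ε).ne
    exact absurd h2 (not_le.mpr hlt)
  · exact hmin

lemma stApp_reset_of_none (s2 : List V) (v w : V)
    (hw : w ≠ ((G.modeProf l ξ none) (G.control v)).toFun s2 v) :
    G.stApp l ξ (none, s2) v w = (some v, [v]) := by
  unfold stApp
  rw [if_neg hw]

lemma stApp_tolerate (s2 : List V) (a v w : V)
    (hw : w ≠ ((G.modeProf l ξ (some a)) (G.control v)).toFun s2 v)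
    (h1 : G.control v = G.control a) (h2 : ¬ G.nego l v < G.nego l a) :
    G.stApp l ξ (some a, s2) v w = (some a, s2 ++ [v]) := by
  unfold stApp
  rw [if_neg hw]
  exact if_pos ⟨h1, h2⟩

lemma stApp_reset_of_some (s2 : List V) (a v w : V)
    (hw : w ≠ ((G.modeProf l ξ (some a)) (G.control v)).toFun s2 v)
    (hcond : ¬ (G.control v = G.control a ∧ ¬ G.nego l v < G.nego l a)) :
    G.stApp l ξ (some a, s2) v w = (some v, [v]) := by
  unfold stApp
  rw [if_neg hw]
  exact if_neg hcond

lemma stInv_all {v₀ : V} (hξ0 : ξ 0 = v₀) (hξ2 : G.IsPlay ξ) (hcons : G.Consistent l ξ)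
    (hsteady : G.SteadyNego) {ε : ℝ} (hfix : G.IsEFix ε l) :
    ∀ h v, G.IsHistFrom v₀ h v → StInv (G := G) l ξ h v := by
  intro h
  induction h using List.reverseRecOn with
  | nil =>
      intro v hv
      have hv0 : v = v₀ := by
        have := hv.2
        simpa using this
      subst hv0
      constructor
      · intro lh hst
        rw [stateOf_nil] at hst
        have hlh : lh = [] := by
          have := congrArg Prod.snd hst
          simpa using this.symm
        subst hlh
        refine ⟨rfl, ?_⟩
        unfold ξpre
        simp [List.range_succ, hξ0]
      · intro a lh hst
        rw [stateOf_nil] at hst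
        have := congrArg Prod.fst hst
        simp at this
  | append_singleton h v ih =>
      intro w hw
      rw [isHistFrom_snoc_iff] at hw
      obtain ⟨hh, he⟩ := hw
      have hinv := ih v hh
      have hconsist := mach_consistent (G := G) l ξ hξ2 hcons hh hinv
      have hpunv : G.IsPunishable l v := by
        refine punishable_of_le (G := G) l hsteady hfix
          (r := G.payoff (G.control v) (fun k => G.play (G.mach l ξ) h v (0 + k))) ?_
        have := hconsist 0
        simpa [play_zero] using this
      have hsnoc : G.stateOf l ξ (h ++ [v]) w = G.stApp l ξ (G.stateOf l ξ h v) v w :=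
        stateOf_snoc G l ξ h v w
      have hsplit : G.stateOf l ξ h v = ((G.stateOf l ξ h v).1, (G.stateOf l ξ h v).2) :=
        Prod.mk.eta.symm
      cases hmode : (G.stateOf l ξ h v).1 with
      | none =>
          obtain ⟨hlh, hpre⟩ := hinv.1 _ (by rw [← hmode])
          by_cases hcf : w = ((G.modeProf l ξ (G.stateOf l ξ h v).1)
              (G.control v)).toFun (G.stateOf l ξ h v).2 v
          · -- conforming step in conforming mode
            have hst2 : G.stateOf l ξ (h ++ [v]) w
                = (none, (G.stateOf l ξ h v).2 ++ [v]) := by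
              rw [hsnoc, hcf]
              rw [stApp_conform (G := G) l ξ (G.stateOf l ξ h v) v, hmode]
            constructor
            · intro lh' hst'
              rw [hst2] at hst'
              have hlh' : lh' = (G.stateOf l ξ h v).2 ++ [v] := by
                have := congrArg Prod.snd hst'
                simpa using this.symm
              subst hlh'
              rw [hlh]
              refine ⟨rfl, ?_⟩
              have hwv : w = ξ (h.length + 1) := by
                rw [hcf, hmode, hlh]
                exact ξStrat_move (G := G) (ξ := ξ) hξ2 (by rw [← hlh] at hpre ⊢; exact hpre)
              rw [hwv]
              exact ξpre_extend ξ (by rw [← hlh] at hpre ⊢; exact hpre)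
            · intro a' lh' hst'
              rw [hst2] at hst'
              have := congrArg Prod.fst hst'
              simp at this
          · -- reset from conforming mode
            have hst2 : G.stateOf l ξ (h ++ [v]) w = (some v, [v]) := by
              rw [hsnoc, hsplit, hmode]
              exact stApp_reset_of_none (G := G) l ξ _ v w (by rw [← hmode]; exact hcf)
            constructor
            · intro lh' hst'
              rw [hst2] at hst'
              have := congrArg Prod.fst hst'
              simp at this
            · intro a' lh' hst'
              rw [hst2] at hst'
              have ha' : a' = v := by
                have := congrArg Prod.fst hst'
                simpa using this.symm
              have hlh' : lh' = [v] := by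
                have := congrArg Prod.snd hst'
                simpa using this.symm
              rw [ha', hlh']
              exact ⟨hpunv, ⟨h, rfl⟩, by simp, rfl,
                compatExcept_pair (G := G) _ w rfl⟩
      | some a =>
          obtain ⟨hpun, ⟨base, hbase⟩, hne, hhead, hcomp⟩ := hinv.2 a _ (by rw [← hmode])
          by_cases hcf : w = ((G.modeProf l ξ (G.stateOf l ξ h v).1)
              (G.control v)).toFun (G.stateOf l ξ h v).2 v
          · -- conforming step in punishment mode
            have hst2 : G.stateOf l ξ (h ++ [v]) w
                = (some a, (G.stateOf l ξ h v).2 ++ [v]) := by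
              rw [hsnoc, hcf]
              rw [stApp_conform (G := G) l ξ (G.stateOf l ξ h v) v, hmode]
            constructor
            · intro lh' hst'
              rw [hst2] at hst'
              have := congrArg Prod.fst hst'
              simp at this
            · intro a' lh' hst'
              rw [hst2] at hst'
              have ha' : a' = a := by
                have := congrArg Prod.fst hst'
                simpa using this.symm
              have hlh' : lh' = (G.stateOf l ξ h v).2 ++ [v] := by
                have := congrArg Prod.snd hst'
                simpa using this.symm
              rw [ha', hlh']
              refine ⟨hpun, ⟨base, ?_⟩, by simp, ?_, ?_⟩
              · conv_lhs => rw [hbase]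
                rw [List.append_assoc]
              · rw [head?_append_of_ne_nil _ hne]
                exact hhead
              · refine compatExcept_snoc hcomp ?_
                intro j hj hcontrol
                rw [hcf, hmode, hcontrol]
                have hupd : G.modeProf l ξ (some a) j = G.pun l a j :=
                  Function.update_of_ne hj _ _
                rw [hupd]
          · -- non-conforming step in punishment mode
            by_cases htol : G.control v = G.control a ∧ ¬ G.nego l v < G.nego l a
            · -- tolerated deviation of the punished player
              have hst2 : G.stateOf l ξ (h ++ [v]) w
                  = (some a, (G.stateOf l ξ h v).2 ++ [v]) := by
                rw [hsnoc, hsplit, hmode]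
                exact stApp_tolerate (G := G) l ξ _ a v w
                  (by rw [← hmode]; exact hcf) htol.1 htol.2
              constructor
              · intro lh' hst'
                rw [hst2] at hst'
                have := congrArg Prod.fst hst'
                simp at this
              · intro a' lh' hst'
                rw [hst2] at hst'
                have ha' : a' = a := by
                  have := congrArg Prod.fst hst'
                  simpa using this.symm
                have hlh' : lh' = (G.stateOf l ξ h v).2 ++ [v] := by
                  have := congrArg Prod.snd hst'
                  simpa using this.symm
                rw [ha', hlh']
                refine ⟨hpun, ⟨base, ?_⟩, by simp, ?_, ?_⟩
                · conv_lhs => rw [hbase]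
                  rw [List.append_assoc]
                · rw [head?_append_of_ne_nil _ hne]
                  exact hhead
                · refine compatExcept_snoc hcomp ?_
                  intro j hj hcontrol
                  exact absurd (hcontrol ▸ htol.1) hj
            · -- reset: punish the deviator at `v`
              have hst2 : G.stateOf l ξ (h ++ [v]) w = (some v, [v]) := by
                rw [hsnoc, hsplit, hmode]
                exact stApp_reset_of_some (G := G) l ξ _ a v w
                  (by rw [← hmode]; exact hcf) htol
              constructor
              · intro lh' hst'
                rw [hst2] at hst'
                have := congrArg Prod.fst hst'
                simp at this
              · intro a' lh' hst'
                rw [hst2] at hst'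
                have ha' : a' = v := by
                  have := congrArg Prod.fst hst'
                  simpa using this.symm
                have hlh' : lh' = [v] := by
                  have := congrArg Prod.snd hst'
                  simpa using this.symm
                rw [ha', hlh']
                exact ⟨hpunv, ⟨h, rfl⟩, by simp, rfl,
                  compatExcept_pair (G := G) _ w rfl⟩

/-! ### Replay lemma and value of punishment -/

lemma chain'_get {lc : List V} (hc : List.Chain' G.E lc) {k : ℕ} {x y : V}
    (hx : lc[k]? = some x) (hy : lc[k + 1]? = some y) : G.E x y := by
  unfold List.Chain' at hc
  rw [List.isChain_iff_getElem] at hc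
  obtain ⟨hkl, hxv⟩ := List.getElem?_eq_some_iff.mp hx
  obtain ⟨hkl2, hyv⟩ := List.getElem?_eq_some_iff.mp hy
  have h := hc k (by omega)
  rw [List.getElem?_eq_getElem hkl] at hx
  rw [List.getElem?_eq_getElem hkl2] at hy
  have hx' : lc.get ⟨k, hkl⟩ = x := by simpa using hx
  have hy' : lc.get ⟨k + 1, hkl2⟩ = y := by simpa using hy
  rw [← hx', ← hy']
  exact h

lemma take_eq_rangeMap {lc : List V} {L : ℕ → V} {n : ℕ} (hn : n ≤ lc.length)
    (hag : ∀ k, k < n → lc[k]? = some (L k)) :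
    lc.take n = (List.range n).map L := by
  apply List.ext_getElem?
  intro k
  by_cases hk : k < n
  · rw [List.getElem?_take_of_lt hk, hag k hk]
    simp [List.getElem?_map, List.getElem?_range hk]
  · rw [List.getElem?_eq_none_iff.mpr, List.getElem?_eq_none_iff.mpr]
    · simp; omega
    · simp; omega

lemma list_eq_rangeMap {lc : List V} {L : ℕ → V}
    (hag : ∀ k, k < lc.length → lc[k]? = some (L k)) :
    lc = (List.range lc.length).map L := by
  have := take_eq_rangeMap (le_refl lc.length) hag
  simpa using this

lemma isHistFrom_play {v₀ : V} (σ : G.Profile) {h : List V} {v : V}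
    (hh : G.IsHistFrom v₀ h v) (n : ℕ) :
    G.IsHistFrom v₀ (G.histOf σ h v n) (G.play σ h v n) := by
  induction n with
  | zero => exact hh
  | succ n ih =>
      rw [histOf_succ, play_succ_top]
      rw [isHistFrom_snoc_iff]
      exact ⟨ih, Strategy.valid _ _ _⟩

lemma val_pun_eq_nego {a : V} (hpun : G.IsPunishable l a) :
    G.valAgainst (G.control a) (G.pun l a) a = G.nego l a := by
  apply le_antisymm
  · exact le_iInf₂ fun τ hτ => pun_min G l hpun τ hτ
  · exact iInf₂_le _ (pun_mem G l hpun)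

lemma replay {a : V} (L : ℕ → V) (h0 : L 0 = a)
    (hedge : ∀ n, G.E (L n) (L (n + 1)))
    (hcomp : ∀ n, G.control (L n) ≠ G.control a →
      L (n + 1) = ((G.pun l a) (G.control (L n))).toFun ((List.range n).map L) (L n)) :
    (G.payoff (G.control a) L : EReal) ≤ G.valAgainst (G.control a) (G.pun l a) a := by
  classical
  set c := G.control a with hc
  set σrep : G.Strategy := ⟨fun hs x => if G.E x (L (hs.length + 1)) ∧ x = L hs.length
      then L (hs.length + 1) else G.dflt x, by
    intro hs x
    split
    · next hcnd => exact hcnd.1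
    · next => exact G.dflt_edge x⟩ with hσ
  have key : ∀ n, (G.step (Function.update (G.pun l a) c σrep))^[n] ([], a)
      = ((List.range n).map L, L n) := by
    intro n
    induction n with
    | zero => simp [h0]
    | succ n ih =>
        rw [Function.iterate_succ_apply', ih]
        unfold step
        refine Prod.ext ?_ ?_
        · show (List.range n).map L ++ [L n] = (List.range (n + 1)).map L
          rw [List.range_succ, List.map_append]
          rfl
        · show (Function.update (G.pun l a) c σrep (G.control (L n))).toFun
              ((List.range n).map L) (L n) = L (n + 1)
          by_cases hctl : G.control (L n) = c
          · rw [hctl, Function.update_self]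
            show (if G.E (L n) (L (((List.range n).map L).length + 1))
                ∧ L n = L ((List.range n).map L).length
              then L (((List.range n).map L).length + 1) else G.dflt (L n)) = L (n + 1)
            simp only [List.length_map, List.length_range]
            split
            · rfl
            · next hcnd => exact absurd ⟨hedge n, trivial⟩ hcnd
          · rw [Function.update_of_ne hctl]
            exact (hcomp n hctl).symm
  have hplay : G.play (Function.update (G.pun l a) c σrep) [] a = L :=
    funext fun n => congrArg Prod.snd (key n)
  have hle := le_iSup (fun σi : G.Strategy =>
    (G.payoff c (G.play (Function.update (G.pun l a) c σi) [] a) : EReal)) σrep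
  rw [hplay] at hle
  exact hle

/-! ### Bounding deviation payoffs -/

lemma devBound [Fintype V] {v₀ : V} (hξ0 : ξ 0 = v₀) (hξ2 : G.IsPlay ξ)
    (hcons : G.Consistent l ξ) (hsteady : G.SteadyNego) {ε : ℝ} (hfix : G.IsEFix ε l)
    (hpi : G.PrefixIndependent) (i : P) (σ' : G.Strategy) :
    ∀ N : ℕ, ∀ h : List V, ∀ v a : V, G.IsHistFrom v₀ h v →
      G.stateOf l ξ h v = (some a, (G.stateOf l ξ h v).2) → G.control a = i →
      {x : V | G.nego l x < G.nego l a}.ncard ≤ N →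
      (G.payoff i (G.play (Function.update (G.mach l ξ) i σ') h v) : EReal)
        ≤ G.nego l a := by
  intro N
  induction N using Nat.strong_induction_on with
  | _ N IH =>
  intro h v a hh hst hctl hcard
  classical
  set D := G.play (Function.update (G.mach l ξ) i σ') h v with hD
  have hDshift : ∀ n, (fun k => D (n + k))
      = G.play (Function.update (G.mach l ξ) i σ') (h ++ (List.range n).map D) (D n) := by
    intro n
    funext k
    show G.play _ h v (n + k) = _
    rw [play_add]
    congr 1
    exact histOf_eq _ h v n
  have hhistn : ∀ n, G.IsHistFrom v₀ (h ++ (List.range n).map D) (D n) := by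
    intro n
    have := isHistFrom_play (Function.update (G.mach l ξ) i σ') hh n
    rwa [histOf_eq] at this
  by_cases hres : ∀ n, G.stateOf l ξ (h ++ (List.range n).map D) (D n)
      = (some a, (G.stateOf l ξ h v).2 ++ (List.range n).map D)
  · -- no further punishment reset: replay against the punishment profile
    obtain ⟨hpun, ⟨base, hbase⟩, hne, hhead, hcomp⟩ :=
      (stInv_all (G := G) l ξ hξ0 hξ2 hcons hsteady hfix h v hh).2 a _ hst
    set lh := (G.stateOf l ξ h v).2 with hlh
    set p := lh.length with hp
    set L := prependList lh D with hL
    have hchain : List.Chain' G.E (lh ++ [v]) := by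
      have := hh.1
      rw [hbase, List.append_assoc] at this
      exact chain'_suffix' (G := G) this
    have hLlt : ∀ k (hk : k < p), L k = lh.get ⟨k, hk⟩ := fun k hk => dif_pos hk
    have hLge : ∀ k, L (p + k) = D k := fun k => prependList_add lh D k
    have hLp : L p = v := by
      have := hLge 0
      exact this.trans (play_zero _ h v)
    have hgetp : ∀ k, k ≤ p → (lh ++ [v])[k]? = some (L k) := by
      intro k hk
      rcases lt_or_eq_of_le hk with hk' | hk'
      · rw [List.getElem?_append_left (by simpa using hk'), hLlt k hk']
        exact List.getElem?_eq_getElem hk'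
      · subst hk'
        rw [hLp]
        exact List.getElem?_concat_length
    have hp0 : 0 < p := List.length_pos_iff.mpr hne
    have h0 : L 0 = a := by
      have h1 := hgetp 0 (by omega)
      have h2 : (lh ++ [v])[0]? = some a := by
        rw [List.getElem?_append_left (by simpa using hp0), ← List.head?_eq_getElem?, hhead]
      rw [h1] at h2
      exact (Option.some.injEq _ _ ▸ h2)
    have hedge : ∀ n, G.E (L n) (L (n + 1)) := by
      intro n
      by_cases hn : n + 1 ≤ p
      · exact chain'_get (G := G) hchain (hgetp n (by omega)) (hgetp (n + 1) hn)
      · have hn' : p ≤ n := by omega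
        obtain ⟨k, rfl⟩ := Nat.exists_eq_add_of_le hn'
        have h1 : L (p + k + 1) = D (k + 1) := by
          rw [add_assoc]
          exact hLge (k + 1)
        rw [hLge k, h1]
        exact play_edge _ h v k
    have hsplitL : ∀ k, (List.range (p + k)).map L = lh ++ (List.range k).map D := by
      intro k
      rw [List.range_add, List.map_append, List.map_map]
      congr 1
      · symm
        have hagl : ∀ m, m < lh.length → lh[m]? = some (L m) := by
          intro m hm
          rw [hLlt m hm]
          exact List.getElem?_eq_getElem hm
        exact list_eq_rangeMap hagl
      · apply List.map_congr_left
        intro j _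
        show L (p + j) = D j
        exact hLge j
    have hcompL : ∀ n, G.control (L n) ≠ G.control a →
        L (n + 1) = ((G.pun l a) (G.control (L n))).toFun ((List.range n).map L) (L n) := by
      intro n hctln
      by_cases hn : n + 1 ≤ p
      · have hcl := hcomp (G.control (L n)) hctln n (L n) (L (n + 1))
          (hgetp n (by omega)) (hgetp (n + 1) hn) rfl
        rw [hcl]
        congr 1
        exact take_eq_rangeMap
          (by simp only [List.length_append, List.length_singleton]; omega)
          (fun k hk => hgetp k (by omega))
      · have hn' : p ≤ n := by omega
        obtain ⟨k, rfl⟩ := Nat.exists_eq_add_of_le hn'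
        have h1 : L (p + k + 1) = D (k + 1) := by
          rw [add_assoc]
          exact hLge (k + 1)
        have hctlD : G.control (D k) ≠ i := by
          rw [← hctl, ← hLge k]
          exact hctln
        rw [h1, hLge k]
        show G.play (Function.update (G.mach l ξ) i σ') h v (k + 1) = _
        rw [play_succ_top, Function.update_of_ne hctlD, mach_toFun, histOf_eq, hres k]
        have hupd : G.modeProf l ξ (some a) (G.control (D k))
            = G.pun l a (G.control (D k)) :=
          Function.update_of_ne (by rw [hctl]; exact hctlD) _ _
        show (G.modeProf l ξ (some a) (G.control (D k))).toFun _ (D k) = _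
        rw [hupd]
        congr 1
        rw [hsplitL k]
    have hrepl := replay (G := G) l L h0 hedge hcompL
    rw [val_pun_eq_nego (G := G) l hpun, hctl] at hrepl
    have hpayL : G.payoff i L = G.payoff i D := by
      have hchain' : List.Chain' G.E lh := (List.isChain_append.mp hchain).1
      exact hpi lh D ⟨hne, hchain'⟩ (isPlay_play _ h v) i
    rwa [hpayL] at hrepl
  · -- a reset occurs: strictly smaller negotiation value, use induction
    push_neg at hres
    have hex : ∃ n, G.stateOf l ξ (h ++ (List.range n).map D) (D n)
        ≠ (some a, (G.stateOf l ξ h v).2 ++ (List.range n).map D) := hres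
    obtain ⟨m', hm'⟩ : ∃ m', Nat.find hex = m' + 1 := by
      have h0 : Nat.find hex ≠ 0 := by
        intro h0
        have hsp := Nat.find_spec hex
        rw [h0] at hsp
        apply hsp
        simpa [hD, play_zero] using hst
      exact ⟨Nat.find hex - 1, by omega⟩
    have hmspec := Nat.find_spec hex
    rw [hm'] at hmspec
    have hprev : G.stateOf l ξ (h ++ (List.range m').map D) (D m')
        = (some a, (G.stateOf l ξ h v).2 ++ (List.range m').map D) :=
      not_not.mp (Nat.find_min hex (by omega))
    have hsnoc2 : G.stateOf l ξ (h ++ (List.range (m' + 1)).map D) (D (m' + 1))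
        = G.stApp l ξ (some a, (G.stateOf l ξ h v).2 ++ (List.range m').map D)
            (D m') (D (m' + 1)) := by
      rw [List.range_succ, List.map_append]
      simp only [List.map_cons, List.map_nil]
      rw [← List.append_assoc, stateOf_snoc, hprev]
    have hDm1 : D (m' + 1) = (Function.update (G.mach l ξ) i σ' (G.control (D m'))).toFun
        (h ++ (List.range m').map D) (D m') := by
      show G.play _ h v (m' + 1) = _
      rw [play_succ_top, histOf_eq]
    have hnotconf : D (m' + 1)
        ≠ ((G.modeProf l ξ (some a)) (G.control (D m'))).toFun
            ((G.stateOf l ξ h v).2 ++ (List.range m').map D) (D m') := by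
      intro hconf
      apply hmspec
      rw [hsnoc2]
      have hca := stApp_conform (G := G) l ξ
        (some a, (G.stateOf l ξ h v).2 ++ (List.range m').map D) (D m')
      rw [← hconf] at hca
      rw [hca, List.range_succ, List.map_append]
      simp only [List.map_cons, List.map_nil]
      rw [← List.append_assoc]
    have hctlm : G.control (D m') = i := by
      by_contra hctlm
      apply hnotconf
      rw [hDm1, Function.update_of_ne hctlm, mach_toFun, hprev]
    have hneg : G.nego l (D m') < G.nego l a := by
      by_contra hneg
      apply hmspec
      rw [hsnoc2, stApp_tolerate (G := G) l ξ _ a (D m') (D (m' + 1)) hnotconf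
        (by rw [hctlm, ← hctl]) hneg]
      rw [List.range_succ, List.map_append]
      simp only [List.map_cons, List.map_nil]
      rw [← List.append_assoc]
    have hstm : G.stateOf l ξ (h ++ (List.range (m' + 1)).map D) (D (m' + 1))
        = (some (D m'), [D m']) := by
      rw [hsnoc2]
      exact stApp_reset_of_some (G := G) l ξ _ a (D m') (D (m' + 1)) hnotconf
        (fun hcond => hcond.2 hneg)
    have hsub : {x : V | G.nego l x < G.nego l (D m')} ⊂ {x : V | G.nego l x < G.nego l a} := by
      constructor
      · intro x hx
        exact lt_trans hx hneg
      · intro hsup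
        have hx : G.nego l (D m') < G.nego l (D m') := hsup hneg
        exact lt_irrefl _ hx
    have hcard' : {x : V | G.nego l x < G.nego l (D m')}.ncard
        < {x : V | G.nego l x < G.nego l a}.ncard :=
      Set.ncard_lt_ncard hsub (Set.toFinite _)
    have hIH := IH ({x : V | G.nego l x < G.nego l (D m')}.ncard) (by omega)
      (h ++ (List.range (m' + 1)).map D) (D (m' + 1)) (D m')
      (hhistn (m' + 1)) (by rw [hstm]) hctlm (le_refl _)
    have hDisPlay : G.IsPlay D := isPlay_play _ h v
    have hshift := payoff_shift hpi hDisPlay (m' + 1) i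
    rw [hDshift (m' + 1)] at hshift
    rw [hshift]
    exact le_trans hIH (le_of_lt hneg)

end SPEAux
end GameStruct

open GameStruct in
/-- In a well-initialized prefix-independent game with steady negotiation,
if `λ` is an `ε`-fixed point of the negotiation function, then every `λ`-consistent play
from `v₀` is the outcome of some `ε`-SPE. -/
theorem consistent_eps_fixed_point_is_epsSPE_play
    {P V : Type} [Fintype P] [Fintype V] [DecidableEq P]
    (G : GameStruct P V) (v₀ : V) (hwi : G.WellInit v₀) (hpi : G.PrefixIndependent)
    (hsteady : G.SteadyNego) (ε : ℝ) (hε : 0 ≤ ε)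
    (l : V → EReal) (hfix : G.IsEFix ε l)
    (ξ : ℕ → V) (hξ : G.IsPlayFrom v₀ ξ) (hcons : G.Consistent l ξ) :
    ∃ σ : G.Profile, G.IsEpsSPE v₀ ε σ ∧ G.play σ [] v₀ = ξ := by
  classical
  refine ⟨G.mach l ξ, ?_, ?_⟩
  · intro h v hh i σ'
    set P1 := G.play (G.mach l ξ) h v with hP1def
    set P2 := G.play (Function.update (G.mach l ξ) i σ') h v with hP2def
    have hP1play : G.IsPlay P1 := isPlay_play _ h v
    have hP2play : G.IsPlay P2 := isPlay_play _ h v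
    have hpre1 : G.payoff i (prependList h P1) = G.payoff i P1 := by
      cases h with
      | nil => rw [prependList_nil]
      | cons x t => exact hpi _ _ ⟨by simp, (List.isChain_append.mp hh.1).1⟩ hP1play i
    have hpre2 : G.payoff i (prependList h P2) = G.payoff i P2 := by
      cases h with
      | nil => rw [prependList_nil]
      | cons x t => exact hpi _ _ ⟨by simp, (List.isChain_append.mp hh.1).1⟩ hP2play i
    rw [hpre1, hpre2]
    by_cases heq : ∀ n, P2 n = P1 n
    · rw [funext heq]
      linarith
    · have hex : ∃ n, P2 n ≠ P1 n := by push_neg at heq; exact heq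
      obtain ⟨n, hn⟩ : ∃ n, Nat.find hex = n + 1 := by
        have h0 : Nat.find hex ≠ 0 := by
          intro h0
          have := Nat.find_spec hex
          rw [h0] at this
          exact this rfl
        exact ⟨Nat.find hex - 1, by omega⟩
      have hagree : ∀ k, k ≤ n → P2 k = P1 k := by
        intro k hk
        exact not_not.mp (Nat.find_min hex (by omega))
      have hdiff : P2 (n + 1) ≠ P1 (n + 1) := by
        rw [← hn]
        exact Nat.find_spec hex
      have hHeq : (List.range n).map P2 = (List.range n).map P1 := by
        apply List.map_congr_left
        intro x hx
        exact hagree x (le_of_lt (List.mem_range.mp hx))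
      set H := h ++ (List.range n).map P1 with hHdef
      set u := P1 n with hudef
      have hP2n : P2 n = u := hagree n (le_refl n)
      have hC1 : ∀ k, P1 (n + k) = G.play (G.mach l ξ) H u k := by
        intro k
        show G.play _ h v (n + k) = _
        rw [play_add]
        congr 1
        exact histOf_eq _ h v n
      have hH2 : G.histOf (Function.update (G.mach l ξ) i σ') h v n = H := by
        rw [histOf_eq, hHdef]
        congr 1
      have hP2nu : G.play (Function.update (G.mach l ξ) i σ') h v n = u := hP2n
      have hC2 : ∀ k, P2 (n + k) = G.play (Function.update (G.mach l ξ) i σ') H u k := by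
        intro k
        show G.play _ h v (n + k) = _
        rw [play_add, hH2, hP2nu]
      have hP1one : G.play (G.mach l ξ) H u 1 = (G.mach l ξ (G.control u)).toFun H u :=
        play_succ_top _ H u 0
      have hP2one : G.play (Function.update (G.mach l ξ) i σ') H u 1
          = (Function.update (G.mach l ξ) i σ' (G.control u)).toFun H u :=
        play_succ_top _ H u 0
      have hctlu : G.control u = i := by
        by_contra hc
        apply hdiff
        rw [hC1 1, hC2 1, hP1one, hP2one, Function.update_of_ne hc]
      have hhH : G.IsHistFrom v₀ H u := by
        have := isHistFrom_play (G.mach l ξ) hh n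
        rwa [histOf_eq] at this
      have hinvH := stInv_all (G := G) l ξ hξ.1 hξ.2 hcons hsteady hfix H u hhH
      have hconsH := mach_consistent (G := G) l ξ hξ.2 hcons hhH hinvH
      have hlu : l u ≤ (G.payoff i (G.play (G.mach l ξ) H u) : EReal) := by
        have h0 := hconsH 0
        have hfun : (fun k => G.play (G.mach l ξ) H u (0 + k)) = G.play (G.mach l ξ) H u := by
          funext k
          rw [zero_add]
        rw [play_zero, hfun, hctlu] at h0
        exact h0
      have ht1 : G.payoff i P1 = G.payoff i (G.play (G.mach l ξ) H u) := by
        rw [payoff_shift hpi hP1play n i]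
        congr 1
        funext k
        exact hC1 k
      have ht2 : G.payoff i P2
          = G.payoff i (G.play (Function.update (G.mach l ξ) i σ') H u) := by
        rw [payoff_shift hpi hP2play n i]
        congr 1
        funext k
        exact hC2 k
      rw [ht1, ht2]
      set w2 := G.play (Function.update (G.mach l ξ) i σ') H u 1 with hw2def
      have hw2ne : w2 ≠ ((G.modeProf l ξ (G.stateOf l ξ H u).1) (G.control u)).toFun
          (G.stateOf l ξ H u).2 u := by
        intro hcontra
        apply hdiff
        rw [hC1 1, hC2 1, hP1one]
        show w2 = _
        rw [hcontra, mach_toFun]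
      have hEuw2 : G.E u w2 := play_edge _ H u 0
      have hsh2 : G.payoff i (G.play (Function.update (G.mach l ξ) i σ') H u)
          = G.payoff i (G.play (Function.update (G.mach l ξ) i σ') (H ++ [u]) w2) := by
        rw [payoff_shift hpi (isPlay_play _ H u) 1 i]
        congr 1
        funext k
        show G.play _ H u (1 + k) = _
        have hH1 : G.histOf (Function.update (G.mach l ξ) i σ') H u 1 = H ++ [u] := by
          rw [histOf_eq, show List.range 1 = [0] by decide]
          rfl
        have hp1 : G.play (Function.update (G.mach l ξ) i σ') H u 1 = w2 := rfl
        rw [play_add, hH1, hp1]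
      have hsplitH : G.stateOf l ξ H u = ((G.stateOf l ξ H u).1, (G.stateOf l ξ H u).2) :=
        Prod.mk.eta.symm
      -- key bound on the deviation payoff
      have hbound : (G.payoff i (G.play (Function.update (G.mach l ξ) i σ') H u) : EReal)
          ≤ l u + (ε : EReal) := by
        cases hmodeH : (G.stateOf l ξ H u).1 with
        | none =>
            have hstW : G.stateOf l ξ (H ++ [u]) w2 = (some u, [u]) := by
              rw [stateOf_snoc, hsplitH, hmodeH]
              exact stApp_reset_of_none (G := G) l ξ _ u w2 (by rw [← hmodeH]; exact hw2ne)
            have hdev := devBound (G := G) l ξ hξ.1 hξ.2 hcons hsteady hfix hpi i σ'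
              ({x : V | G.nego l x < G.nego l u}.ncard) (H ++ [u]) w2 u
              ((isHistFrom_snoc_iff H u w2).mpr ⟨hhH, hEuw2⟩)
              (by rw [hstW]) hctlu (le_refl _)
            rw [hsh2]
            exact le_trans hdev (hfix u).2
        | some a =>
            by_cases htol : G.control u = G.control a ∧ ¬ G.nego l u < G.nego l a
            · have hdev := devBound (G := G) l ξ hξ.1 hξ.2 hcons hsteady hfix hpi i σ'
                ({x : V | G.nego l x < G.nego l a}.ncard) H u a hhH
                (by rw [← hmodeH]) (by rw [← htol.1]; exact hctlu) (le_refl _)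
              refine le_trans hdev (le_trans (not_lt.mp htol.2) (hfix u).2)
            · have hstW : G.stateOf l ξ (H ++ [u]) w2 = (some u, [u]) := by
                rw [stateOf_snoc, hsplitH, hmodeH]
                exact stApp_reset_of_some (G := G) l ξ _ a u w2
                  (by rw [← hmodeH]; exact hw2ne) htol
              have hdev := devBound (G := G) l ξ hξ.1 hξ.2 hcons hsteady hfix hpi i σ'
                ({x : V | G.nego l x < G.nego l u}.ncard) (H ++ [u]) w2 u
                ((isHistFrom_snoc_iff H u w2).mpr ⟨hhH, hEuw2⟩)
                (by rw [hstW]) hctlu (le_refl _)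
              rw [hsh2]
              exact le_trans hdev (hfix u).2
      have hfin : (G.payoff i (G.play (Function.update (G.mach l ξ) i σ') H u) : EReal)
          ≤ ((G.payoff i (G.play (G.mach l ξ) H u) + ε : ℝ) : EReal) := by
        rw [EReal.coe_add]
        exact le_trans hbound (add_le_add hlu le_rfl)
      exact_mod_cast hfin
  · funext n
    have h1 := play_mach (G := G) l ξ [] v₀ n
    rw [stateOf_nil] at h1
    rw [h1]
    have hpre : ξpre ξ [] v₀ := by
      unfold ξpre
      simp [List.range_succ, hξ.1]
    have h2 := play_conform (G := G) l ξ hξ.2 hpre n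
    simpa using h2
end
end
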